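/- Let q be an odd prime power, let f ∈ F_q[X], and let r be a positive integer. Then the function on F_{q^r} induced by f is planar if and only if every triple (x, y, z) ∈ F_{q^r}^3 with G(x, y, z) = 0 satisfies x = y or x = z (here G is evaluated in F_{q^r} via the inclusion of F_q into F_{q^r}). -/
import Mathlib


open Polynomial

/-- A function on a field of odd characteristic is planar if for every nonzero `ε`
the map `x ↦ f (x + ε) - f x` is a bijection. -/
def IsPlanarOdd {F : Type} [Field F] (f : F → F) : Prop :=
  ∀ ε : F, ε ≠ 0 → Function.Bijective (fun x : F => f (x + ε) - f x)

theorem planar_iff_zeros_of_G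
    (K : Type) [Field K] [Fintype K] (hodd : Odd (Fintype.card K))
    (f : K[X]) (G : MvPolynomial (Fin 3) K)
    (hG : (MvPolynomial.X 0 - MvPolynomial.X 1) * (MvPolynomial.X 0 - MvPolynomial.X 2) * G =
      Polynomial.aeval (MvPolynomial.X 0) f - Polynomial.aeval (MvPolynomial.X 1) f -
        Polynomial.aeval (MvPolynomial.X 2) f +
        Polynomial.aeval (-MvPolynomial.X 0 + MvPolynomial.X 1 + MvPolynomial.X 2) f)
    (r : ℕ) (hr : 0 < r)
    (L : Type) [Field L] [Fintype L] [Algebra K L]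
    (hL : Fintype.card L = Fintype.card K ^ r) :
    IsPlanarOdd (fun x : L => Polynomial.aeval x f) ↔
      ∀ x y z : L, MvPolynomial.aeval ![x, y, z] G = 0 → x = y ∨ x = z := by
  have key : ∀ x y z : L, (x - y) * (x - z) * MvPolynomial.aeval ![x, y, z] G =
      Polynomial.aeval x f - Polynomial.aeval y f - Polynomial.aeval z f +
        Polynomial.aeval (-x + y + z) f := by
    intro x y z
    have h := congrArg (MvPolynomial.aeval (R := K) ![x, y, z]) hG
    simpa [map_mul, map_sub, map_add, map_neg, ← Polynomial.aeval_algHom_apply,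
      Matrix.cons_val_zero, Matrix.cons_val_one, Matrix.head_cons] using h
  constructor
  · intro hp x y z hGz
    have h := key x y z
    rw [hGz, mul_zero] at h
    by_cases hxy : x = y
    · exact Or.inl hxy
    right
    have hε : x - y ≠ 0 := sub_ne_zero.mpr hxy
    have hinj := (hp (x - y) hε).injective
    have heq : (fun t : L => Polynomial.aeval (t + (x - y)) f - Polynomial.aeval t f) y =
        (fun t : L => Polynomial.aeval (t + (x - y)) f - Polynomial.aeval t f) (-x + y + z) := by
      simp only
      have e1 : y + (x - y) = x := by ring
      have e2 : (-x + y + z) + (x - y) = z := by ring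
      rw [e1, e2]
      linear_combination -h
    have := hinj heq
    linear_combination this
  · intro hcond ε hε
    rw [← Finite.injective_iff_bijective]
    intro a b hab
    simp only at hab
    have h := key (a + ε) a (b + ε)
    have hw : -(a + ε) + a + (b + ε) = b := by ring
    rw [hw] at h
    have h0 : (a + ε - a) * (a + ε - (b + ε)) * MvPolynomial.aeval ![a + ε, a, b + ε] G = 0 := by
      rw [h]; linear_combination hab
    rcases mul_eq_zero.mp h0 with h1 | h2
    · rcases mul_eq_zero.mp h1 with h3 | h4
      · exact absurd (by linear_combination h3 : ε = 0) hε
      · linear_combination h4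
    · rcases hcond _ _ _ h2 with h5 | h6
      · exact absurd (by linear_combination h5 : ε = 0) hε
      · linear_combination h6
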